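/- The formal power series E ∈ ℚ⟦t⟧ whose n-th coefficient is f(0,n) satisfies E = 1 + t²·E². -/

import Mathlib

/-- The number of walks of length `n` on the nonnegative integers starting at `0`,
ending at `i`, with steps `+1` or `-1`. -/
noncomputable def walkCount (i n : ℕ) : ℕ :=
  Nat.card {w : Fin (n + 1) → ℕ //
    w 0 = 0 ∧ w (Fin.last n) = i ∧
    ∀ k : Fin n, ((w k.succ : ℤ) - (w k.castSucc : ℤ)).natAbs = 1}

namespace ExcursionAux

open Finset PowerSeries

def Cond (i n : ℕ) (w : Fin (n + 1) → ℕ) : Prop :=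
  w 0 = 0 ∧ w (Fin.last n) = i ∧
    ∀ k : Fin n, ((w k.succ : ℤ) - (w k.castSucc : ℤ)).natAbs = 1

lemma walkCount_eq (i n : ℕ) : walkCount i n = Nat.card {w : Fin (n + 1) → ℕ // Cond i n w} :=
  rfl

lemma step_cases {n : ℕ} {w : Fin (n + 1) → ℕ}
    (hw : ∀ k : Fin n, ((w k.succ : ℤ) - (w k.castSucc : ℤ)).natAbs = 1) (k : Fin n) :
    w k.succ = w k.castSucc + 1 ∨ w k.castSucc = w k.succ + 1 := by
  have h := hw k
  rw [Int.natAbs_eq_iff] at h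
  omega

instance walkFinite (i n : ℕ) : Finite {w : Fin (n + 1) → ℕ // Cond i n w} := by
  apply Finite.of_injective
    (fun w : {w : Fin (n + 1) → ℕ // Cond i n w} =>
      (fun k : Fin n => decide (w.1 k.castSucc < w.1 k.succ)))
  intro w w' hww
  apply Subtype.ext
  funext x
  obtain ⟨m, hm⟩ := x
  induction m with
  | zero =>
    have h1 : (⟨0, hm⟩ : Fin (n + 1)) = 0 := rfl
    rw [h1, w.2.1, w'.2.1]
  | succ m ih =>
    have hmn : m < n := by omega
    have pm : m < n + 1 := by omega
    set k : Fin n := ⟨m, hmn⟩ with hk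
    have hc : k.castSucc = ⟨m, pm⟩ := rfl
    have hs : k.succ = ⟨m + 1, hm⟩ := rfl
    have hb := congrFun hww k
    simp only at hb
    rw [decide_eq_decide] at hb
    have h1 := step_cases w.2.2.2 k
    have h2 := step_cases w'.2.2.2 k
    have ihm := ih pm
    rw [hc, hs] at h1 h2 hb
    rw [ihm] at h1 hb
    omega

lemma walkCount_zero (i : ℕ) : walkCount i 0 = if i = 0 then 1 else 0 := by
  rw [walkCount_eq]
  rcases eq_or_ne i 0 with rfl | hi
  · rw [if_pos rfl, Nat.card_eq_one_iff_unique]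
    constructor
    · constructor
      intro a b
      apply Subtype.ext
      funext x
      have hx : x = 0 := by omega
      rw [hx, a.2.1, b.2.1]
    · exact ⟨⟨fun _ => 0, rfl, rfl, fun k => k.elim0⟩⟩
  · rw [if_neg hi, Nat.card_eq_zero]
    left
    constructor
    rintro ⟨w, h0, hl, _⟩
    have : Fin.last 0 = (0 : Fin 1) := rfl
    rw [this, h0] at hl
    exact hi hl.symm

lemma cond_snoc {i n a : ℕ} {v : Fin (n + 1) → ℕ} (hv : Cond i n v)
    (ha : ((a : ℤ) - (i : ℤ)).natAbs = 1) : Cond a (n + 1) (Fin.snoc v a) := by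
  obtain ⟨h0, hl, hs⟩ := hv
  refine ⟨?_, ?_, ?_⟩
  · rw [← Fin.castSucc_zero, Fin.snoc_castSucc]
    exact h0
  · rw [Fin.snoc_last]
  · intro k
    refine Fin.lastCases ?_ ?_ k
    · rw [Fin.succ_last, Fin.snoc_last, Fin.snoc_castSucc, hl]
      exact ha
    · intro j
      rw [Fin.succ_castSucc, Fin.snoc_castSucc, Fin.snoc_castSucc]
      exact hs j

lemma cond_restrict {a n : ℕ} {w : Fin (n + 2) → ℕ} (hw : Cond a (n + 1) w) :
    Cond (w (Fin.castSucc (Fin.last n))) n (fun j => w (Fin.castSucc j)) := by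
  obtain ⟨h0, hl, hs⟩ := hw
  refine ⟨h0, rfl, ?_⟩
  intro j
  have h1 := hs (Fin.castSucc j)
  rw [Fin.succ_castSucc] at h1
  exact h1

lemma last_step {a n : ℕ} {w : Fin (n + 2) → ℕ} (hw : Cond a (n + 1) w) :
    ((a : ℤ) - (w (Fin.castSucc (Fin.last n)) : ℤ)).natAbs = 1 := by
  have h := hw.2.2 (Fin.last n)
  have h1 : (Fin.last n).succ = Fin.last (n + 1) := rfl
  rw [h1, hw.2.1] at h
  exact h

lemma snoc_restrict {n : ℕ} (w : Fin (n + 2) → ℕ) :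
    Fin.snoc (fun j => w (Fin.castSucc j)) (w (Fin.last (n + 1))) = w := by
  funext x
  refine Fin.lastCases ?_ ?_ x
  · rw [Fin.snoc_last]
  · intro j
    rw [Fin.snoc_castSucc]

def equivZero (n : ℕ) :
    {w : Fin (n + 2) → ℕ // Cond 0 (n + 1) w} ≃ {v : Fin (n + 1) → ℕ // Cond 1 n v} where
  toFun w := ⟨fun j => w.1 (Fin.castSucc j), by
    have h := cond_restrict w.2
    have hl := last_step w.2
    rw [Int.natAbs_eq_iff] at hl
    have h1 : w.1 (Fin.castSucc (Fin.last n)) = 1 := by omega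
    rwa [h1] at h⟩
  invFun v := ⟨Fin.snoc v.1 0, cond_snoc v.2 (by rw [Int.natAbs_eq_iff]; omega)⟩
  left_inv w := by
    apply Subtype.ext
    have h := snoc_restrict w.1
    rw [w.2.2.1] at h
    exact h
  right_inv v := by
    apply Subtype.ext
    funext j
    exact Fin.snoc_castSucc (α := fun _ : Fin (n + 2) => ℕ) (0 : ℕ) v.1 j

def equivSucc (i n : ℕ) :
    {w : Fin (n + 2) → ℕ // Cond (i + 1) (n + 1) w} ≃
      {v : Fin (n + 1) → ℕ // Cond i n v} ⊕ {v : Fin (n + 1) → ℕ // Cond (i + 2) n v} where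
  toFun w :=
    if h : w.1 (Fin.castSucc (Fin.last n)) = i then
      Sum.inl ⟨fun j => w.1 (Fin.castSucc j), by
        have hr := cond_restrict w.2
        rwa [h] at hr⟩
    else
      Sum.inr ⟨fun j => w.1 (Fin.castSucc j), by
        have hl := last_step w.2
        rw [Int.natAbs_eq_iff] at hl
        have h2 : w.1 (Fin.castSucc (Fin.last n)) = i + 2 := by omega
        have hr := cond_restrict w.2
        rwa [h2] at hr⟩
  invFun v :=
    match v with
    | Sum.inl v => ⟨Fin.snoc v.1 (i + 1), cond_snoc v.2 (by rw [Int.natAbs_eq_iff]; omega)⟩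
    | Sum.inr v => ⟨Fin.snoc v.1 (i + 1), cond_snoc v.2 (by rw [Int.natAbs_eq_iff]; omega)⟩
  left_inv w := by
    by_cases h : w.1 (Fin.castSucc (Fin.last n)) = i
    · simp only [dif_pos h]
      apply Subtype.ext
      have hr := snoc_restrict w.1
      rw [w.2.2.1] at hr
      exact hr
    · simp only [dif_neg h]
      apply Subtype.ext
      have hr := snoc_restrict w.1
      rw [w.2.2.1] at hr
      exact hr
  right_inv v := by
    rcases v with v | v
    · have hc : (Fin.snoc v.1 (i + 1) : Fin (n + 2) → ℕ) (Fin.castSucc (Fin.last n)) = i := by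
        rw [Fin.snoc_castSucc]
        exact v.2.2.1
      simp only [dif_pos hc]
      congr 1
      apply Subtype.ext
      funext j
      exact Fin.snoc_castSucc (α := fun _ : Fin (n + 2) => ℕ) (i + 1) v.1 j
    · have hc : (Fin.snoc v.1 (i + 1) : Fin (n + 2) → ℕ) (Fin.castSucc (Fin.last n)) = i + 2 := by
        rw [Fin.snoc_castSucc]
        exact v.2.2.1
      have hc' : ¬ (Fin.snoc v.1 (i + 1) : Fin (n + 2) → ℕ) (Fin.castSucc (Fin.last n)) = i := by
        omega
      simp only [dif_neg hc']
      congr 1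
      apply Subtype.ext
      funext j
      exact Fin.snoc_castSucc (α := fun _ : Fin (n + 2) => ℕ) (i + 1) v.1 j

lemma walkCount_zero_succ (n : ℕ) : walkCount 0 (n + 1) = walkCount 1 n := by
  rw [walkCount_eq, walkCount_eq]
  exact Nat.card_congr (equivZero n)

lemma walkCount_succ_succ (i n : ℕ) :
    walkCount (i + 1) (n + 1) = walkCount i n + walkCount (i + 2) n := by
  rw [walkCount_eq, walkCount_eq, walkCount_eq, Nat.card_congr (equivSucc i n), Nat.card_sum]

def F (i n : ℕ) : ℤ :=
  if 2 ∣ n + i then (n.choose ((n + i) / 2) : ℤ) - n.choose ((n + i) / 2 + 1) else 0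

lemma F_even {i n h : ℕ} (hh : n + i = 2 * h) :
    F i n = (n.choose h : ℤ) - n.choose (h + 1) := by
  have h2 : (n + i) / 2 = h := by omega
  rw [F, if_pos ⟨h, hh⟩, h2]

lemma F_odd {i n : ℕ} (h : ¬ 2 ∣ n + i) : F i n = 0 := by
  rw [F, if_neg h]

lemma F_zero (i : ℕ) : F i 0 = if i = 0 then 1 else 0 := by
  rcases eq_or_ne i 0 with rfl | hi
  · rw [F_even (h := 0) (by ring)]
    simp
  · rw [if_neg hi]
    by_cases h2 : 2 ∣ 0 + i
    · obtain ⟨c, hc⟩ := h2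
      rw [F_even hc]
      rw [Nat.choose_eq_zero_of_lt (by omega), Nat.choose_eq_zero_of_lt (by omega)]
      simp
    · exact F_odd h2

lemma F_zero_succ (n : ℕ) : F 0 (n + 1) = F 1 n := by
  by_cases h2 : 2 ∣ n + 1
  · obtain ⟨h, hh⟩ := h2
    obtain ⟨h', rfl⟩ : ∃ h', h = h' + 1 := ⟨h - 1, by omega⟩
    rw [F_even (show n + 1 + 0 = 2 * (h' + 1) by omega),
      F_even (show n + 1 = 2 * (h' + 1) by omega)]
    have e1 : (n + 1).choose (h' + 1) = n.choose h' + n.choose (h' + 1) :=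
      Nat.choose_succ_succ n h'
    have e2 : (n + 1).choose (h' + 1 + 1) = n.choose (h' + 1) + n.choose (h' + 1 + 1) :=
      Nat.choose_succ_succ n (h' + 1)
    have hsym : n.choose h' = n.choose (h' + 1) := by
      have := Nat.choose_symm (show h' + 1 ≤ n by omega)
      rwa [show n - (h' + 1) = h' by omega] at this
    rw [e1, e2, hsym]
    push_cast
    ring
  · rw [F_odd (by omega), F_odd (by omega)]

lemma F_succ_succ (i n : ℕ) : F (i + 1) (n + 1) = F i n + F (i + 2) n := by
  by_cases h2 : 2 ∣ n + i
  · obtain ⟨h, hh⟩ := h2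
    rw [F_even (show n + 1 + (i + 1) = 2 * (h + 1) by omega),
      F_even (show n + i = 2 * h from hh),
      F_even (show n + (i + 2) = 2 * (h + 1) by omega)]
    have e1 : (n + 1).choose (h + 1) = n.choose h + n.choose (h + 1) :=
      Nat.choose_succ_succ n h
    have e2 : (n + 1).choose (h + 1 + 1) = n.choose (h + 1) + n.choose (h + 1 + 1) :=
      Nat.choose_succ_succ n (h + 1)
    rw [e1, e2]
    push_cast
    ring
  · rw [F_odd (by omega), F_odd (by omega), F_odd (by omega)]
    ring

lemma walkCount_cast (n i : ℕ) : (walkCount i n : ℤ) = F i n := by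
  induction n generalizing i with
  | zero =>
    rw [walkCount_zero, F_zero]
    split <;> simp
  | succ n ih =>
    cases i with
    | zero =>
      rw [walkCount_zero_succ, F_zero_succ, ih]
    | succ i =>
      rw [walkCount_succ_succ, F_succ_succ, ← ih, ← ih]
      push_cast
      ring

lemma walkCount_even (m : ℕ) : walkCount 0 (2 * m) = catalan m := by
  have h := walkCount_cast (2 * m) 0
  rw [F_even (show 2 * m + 0 = 2 * m by ring)] at h
  have hc : (2 * m).choose (m + 1) * (m + 1) = (2 * m).choose m * m := by
    have := Nat.choose_succ_right_eq (2 * m) m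
    rwa [show 2 * m - m = m by omega] at this
  have hcat : (m + 1) * catalan m = (2 * m).choose m := by
    rw [succ_mul_catalan_eq_centralBinom, Nat.centralBinom_eq_two_mul_choose]
  have h1 : ((2 * m).choose (m + 1) : ℤ) * ((m : ℤ) + 1) = ((2 * m).choose m : ℤ) * m := by
    exact_mod_cast hc
  have h2 : ((m : ℤ) + 1) * catalan m = ((2 * m).choose m : ℤ) := by
    exact_mod_cast hcat
  have hm1 : ((m : ℤ) + 1) ≠ 0 := by positivity
  have key : (walkCount 0 (2 * m) : ℤ) = (catalan m : ℤ) := by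
    apply mul_right_cancel₀ hm1
    rw [h]
    linear_combination -h1 - h2
  exact_mod_cast key

lemma walkCount_odd {n : ℕ} (h : ¬ 2 ∣ n) : walkCount 0 n = 0 := by
  have hcast := walkCount_cast n 0
  rw [F_odd (by omega)] at hcast
  exact_mod_cast hcast

lemma conv (m : ℕ) :
    (walkCount 0 (m + 2) : ℚ) =
      ∑ p ∈ Finset.HasAntidiagonal.antidiagonal m, (walkCount 0 p.1 : ℚ) * walkCount 0 p.2 := by
  rw [Finset.Nat.sum_antidiagonal_eq_sum_range_succ_mk]
  by_cases hm : 2 ∣ m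
  · obtain ⟨s, rfl⟩ := hm
    rw [show 2 * s + 2 = 2 * (s + 1) by ring, walkCount_even (s + 1)]
    have hcat : (catalan (s + 1) : ℚ) =
        ∑ j ∈ range (s + 1), (catalan j : ℚ) * catalan (s - j) := by
      rw [catalan_succ' s, Finset.Nat.sum_antidiagonal_eq_sum_range_succ_mk]
      push_cast
      rfl
    rw [hcat]
    have hfil : ∑ k ∈ (range (2 * s + 1)).filter (fun k => 2 ∣ k),
          (walkCount 0 k : ℚ) * walkCount 0 (2 * s - k)
        = ∑ k ∈ range (2 * s + 1), (walkCount 0 k : ℚ) * walkCount 0 (2 * s - k) := by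
      apply Finset.sum_filter_of_ne
      intro k hk hne
      by_contra hodd
      rw [walkCount_odd hodd] at hne
      simp at hne
    rw [show (2 * s).succ = 2 * s + 1 from rfl, ← hfil]
    apply Finset.sum_nbij' (i := fun j => 2 * j) (j := fun k => k / 2)
    · intro j hj
      simp only [Finset.mem_filter, Finset.mem_range] at *
      omega
    · intro k hk
      simp only [Finset.mem_filter, Finset.mem_range] at *
      omega
    · intro j _
      omega
    · intro k hk
      simp only [Finset.mem_filter, Finset.mem_range] at hk
      omega
    · intro j hj
      simp only [Finset.mem_range] at hj
      rw [show 2 * s - 2 * j = 2 * (s - j) by omega, walkCount_even, walkCount_even]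
  · have h1 : walkCount 0 (m + 2) = 0 := walkCount_odd (by omega)
    rw [h1]
    rw [eq_comm]
    push_cast
    apply Finset.sum_eq_zero
    intro k hk
    simp only [Finset.mem_range] at hk
    by_cases hke : 2 ∣ k
    · rw [walkCount_odd (n := m - k) (by omega)]
      simp
    · rw [walkCount_odd hke]
      simp

end ExcursionAux

theorem excursion_series_algebraic :
    (PowerSeries.mk fun n => (walkCount 0 n : ℚ)) =
      1 + PowerSeries.X ^ 2 * (PowerSeries.mk fun n => (walkCount 0 n : ℚ)) ^ 2 := by
  ext n
  rw [map_add]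
  rcases n with _ | _ | m
  · rw [PowerSeries.coeff_mk]
    simp [PowerSeries.coeff_mul, PowerSeries.coeff_X_pow, ExcursionAux.walkCount_zero]
  · rw [PowerSeries.coeff_mk]
    rw [ExcursionAux.walkCount_odd (by omega)]
    simp [PowerSeries.coeff_mul, PowerSeries.coeff_X_pow, Finset.HasAntidiagonal.antidiagonal]
  · rw [PowerSeries.coeff_mk]
    have hX := PowerSeries.coeff_X_pow_mul
      ((PowerSeries.mk fun n => (walkCount 0 n : ℚ)) ^ 2) 2 m
    rw [show m + 1 + 1 = m + 2 from rfl, hX]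
    rw [PowerSeries.coeff_one, if_neg (by omega)]
    rw [sq, PowerSeries.coeff_mul]
    simp only [PowerSeries.coeff_mk]
    rw [zero_add]
    exact ExcursionAux.conv m
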